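/- Let a, b be nonzero complex numbers with a = |a|e^{iφ₁}, b = |b|e^{iφ₂}, φ := φ₂ − φ₁, let k ≥ 1 be an integer, and let W : ℤ → M₂(ℂ) be a bounded function such that sup_{n∈ℤ} ‖n·(W(n) − W(n−k))‖ < ∞. Then there is a constant C ≥ 0 such that for every finitely supported u : ℤ → ℂ², ‖A_k(W·u) − W·(A_k u)‖_{ℓ²(ℤ;ℂ²)} ≤ C·‖u‖_{ℓ²(ℤ;ℂ²)}; in other words, the commutator i[A_k, W], defined on the dense subspace of finitely supported sequences, extends to a bounded operator on ℓ²(ℤ;ℂ²). -/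

import Mathlib

open Complex

/-- The conjugate operator `A_k`, acting pointwise on sequences `u : ℤ → ℂ²` by
`(A_k u)(n) = (i|a||b|/4)·[e^{ikφ}(2n−k)·u(n−k) − e^{−ikφ}(2n+k)·u(n+k)]`. -/
noncomputable def Akop (a b : ℂ) (φ : ℝ) (k : ℕ) (u : ℤ → Fin 2 → ℂ) :
    ℤ → Fin 2 → ℂ := fun n =>
  (Complex.I * (‖a‖ : ℂ) * (‖b‖ : ℂ) / 4) •
    ((Complex.exp ((k : ℂ) * (φ : ℂ) * Complex.I) * (2 * (n : ℂ) - (k : ℂ))) •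
        u (n - (k : ℤ)) -
      (Complex.exp (-((k : ℂ) * (φ : ℂ) * Complex.I)) * (2 * (n : ℂ) + (k : ℂ))) •
        u (n + (k : ℤ)))

/-- The `ℓ²(ℤ;ℂ²)`-norm of a sequence `v : ℤ → ℂ²`. -/
noncomputable def l2normZ (v : ℤ → Fin 2 → ℂ) : ℝ :=
  Real.sqrt (∑' n : ℤ, (‖v n 0‖ ^ 2 + ‖v n 1‖ ^ 2))

/-- Pointwise commutator formula. -/
lemma comm_formula (a b : ℂ) (φ : ℝ) (k : ℕ) (W : ℤ → Matrix (Fin 2) (Fin 2) ℂ)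
    (u : ℤ → Fin 2 → ℂ) (n : ℤ) (i : Fin 2) :
    (Akop a b φ k (fun m => (W m).mulVec (u m)) n -
            (W n).mulVec (Akop a b φ k u n)) i
    = (Complex.I * (‖a‖ : ℂ) * (‖b‖ : ℂ) / 4) *
      ((Complex.exp ((k : ℂ) * (φ : ℂ) * Complex.I) * (2 * (n : ℂ) - (k : ℂ))) *
        (((W (n - (k:ℤ)) - W n) i 0) * u (n - (k:ℤ)) 0 +
          ((W (n - (k:ℤ)) - W n) i 1) * u (n - (k:ℤ)) 1) -
       (Complex.exp (-((k : ℂ) * (φ : ℂ) * Complex.I)) * (2 * (n : ℂ) + (k : ℂ))) *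
        (((W (n + (k:ℤ)) - W n) i 0) * u (n + (k:ℤ)) 0 +
          ((W (n + (k:ℤ)) - W n) i 1) * u (n + (k:ℤ)) 1)) := by
  fin_cases i <;> simp [Akop, Matrix.mulVec, dotProduct, Fin.sum_univ_two, Matrix.sub_apply,
    Pi.smul_apply, Pi.sub_apply, smul_eq_mul]
  all_goals ring

/-- Absolute value bound for the structured product. -/
lemma abs_structured_le (c e₁ e₂ d00 d01 d10 d11 x0 x1 y0 y1 : ℂ) (K : ℝ)
    (h1 : ‖e₁ * d00‖ ≤ K) (h2 : ‖e₁ * d01‖ ≤ K)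
    (h3 : ‖e₂ * d10‖ ≤ K) (h4 : ‖e₂ * d11‖ ≤ K) :
    ‖c * (e₁ * (d00 * x0 + d01 * x1) - e₂ * (d10 * y0 + d11 * y1))‖
      ≤ ‖c‖ * (K * (‖x0‖ + ‖x1‖ +
          ‖y0‖ + ‖y1‖)) := by
  have hsub : ∀ x y : ℂ, ‖x - y‖ ≤ ‖x‖ + ‖y‖ := fun x y => by
    simpa [sub_eq_add_neg] using norm_add_le x (-y)
  have hP : ‖e₁ * (d00 * x0 + d01 * x1)‖
      ≤ ‖e₁ * d00‖ * ‖x0‖ + ‖e₁ * d01‖ * ‖x1‖ := by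
    rw [mul_add]
    refine (norm_add_le _ _).trans (le_of_eq ?_)
    simp only [norm_mul]; ring
  have hQ : ‖e₂ * (d10 * y0 + d11 * y1)‖
      ≤ ‖e₂ * d10‖ * ‖y0‖ + ‖e₂ * d11‖ * ‖y1‖ := by
    rw [mul_add]
    refine (norm_add_le _ _).trans (le_of_eq ?_)
    simp only [norm_mul]; ring
  rw [norm_mul]
  have hstep := (hsub (e₁ * (d00 * x0 + d01 * x1)) (e₂ * (d10 * y0 + d11 * y1)))
  refine (mul_le_mul_of_nonneg_left (hstep.trans (add_le_add hP hQ))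
    (norm_nonneg c)).trans ?_
  have hx0 := norm_nonneg x0
  have hx1 := norm_nonneg x1
  have hy0 := norm_nonneg y0
  have hy1 := norm_nonneg y1
  have : ‖e₁ * d00‖ * ‖x0‖ + ‖e₁ * d01‖ * ‖x1‖ +
      (‖e₂ * d10‖ * ‖y0‖ + ‖e₂ * d11‖ * ‖y1‖)
      ≤ K * (‖x0‖ + ‖x1‖ + ‖y0‖ + ‖y1‖) := by
    nlinarith [mul_le_mul_of_nonneg_right h1 hx0, mul_le_mul_of_nonneg_right h2 hx1,
      mul_le_mul_of_nonneg_right h3 hy0, mul_le_mul_of_nonneg_right h4 hy1]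
  exact mul_le_mul_of_nonneg_left this (norm_nonneg c)

/-- Squares bound. -/
lemma sq_sum_bound (L v0 v1 x0 x1 y0 y1 : ℝ)
    (h0v : 0 ≤ v0) (h1v : 0 ≤ v1)
    (h0 : v0 ≤ L * (x0 + x1 + y0 + y1)) (h1 : v1 ≤ L * (x0 + x1 + y0 + y1)) :
    v0 ^ 2 + v1 ^ 2 ≤ 8 * L ^ 2 * (x0 ^ 2 + x1 ^ 2 + y0 ^ 2 + y1 ^ 2) := by
  have hA := pow_le_pow_left₀ h0v h0 2
  have hB := pow_le_pow_left₀ h1v h1 2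
  have hs : (x0 + x1 + y0 + y1) ^ 2 ≤ 4 * (x0 ^ 2 + x1 ^ 2 + y0 ^ 2 + y1 ^ 2) := by
    nlinarith [sq_nonneg (x0 - x1), sq_nonneg (x0 - y0), sq_nonneg (x0 - y1),
      sq_nonneg (x1 - y0), sq_nonneg (x1 - y1), sq_nonneg (y0 - y1)]
  nlinarith [mul_le_mul_of_nonneg_left hs (sq_nonneg L), hA, hB]

set_option maxHeartbeats 1600000 in
/-- If `W : ℤ → M₂(ℂ)` is bounded and
`sup_n ‖n·(W(n) − W(n−k))‖ < ∞` (stated entrywise, which is equivalent for any matrix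
norm), then the commutator `i[A_k, W]` is bounded on finitely supported sequences for
the `ℓ²(ℤ;ℂ²)`-norm. -/
theorem commutator_Ak_W_bounded (a b : ℂ) (ha : a ≠ 0) (hb : b ≠ 0)
    (φ₁ φ₂ : ℝ) (hφ₁ : φ₁ ∈ Set.Ioc (-Real.pi) Real.pi)
    (hφ₂ : φ₂ ∈ Set.Ioc (-Real.pi) Real.pi)
    (ha' : a = (‖a‖ : ℂ) * Complex.exp ((φ₁ : ℂ) * Complex.I))
    (hb' : b = (‖b‖ : ℂ) * Complex.exp ((φ₂ : ℂ) * Complex.I))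
    (φ : ℝ) (hφ : φ = φ₂ - φ₁) (k : ℕ) (hk : 1 ≤ k)
    (W : ℤ → Matrix (Fin 2) (Fin 2) ℂ)
    (hWbdd : ∃ C₀ : ℝ, ∀ (n : ℤ) (i j : Fin 2), ‖W n i j‖ ≤ C₀)
    (hWq : ∃ C₁ : ℝ, ∀ (n : ℤ) (i j : Fin 2),
      |(n : ℝ)| * ‖(W n - W (n - (k : ℤ))) i j‖ ≤ C₁) :
    ∃ C : ℝ, 0 ≤ C ∧ ∀ u : ℤ → Fin 2 → ℂ, (Function.support u).Finite →
      l2normZ (fun n =>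
          Akop a b φ k (fun m => (W m).mulVec (u m)) n -
            (W n).mulVec (Akop a b φ k u n))
        ≤ C * l2normZ u := by
  obtain ⟨C₀, hC₀⟩ := hWbdd
  obtain ⟨C₁, hC₁⟩ := hWq
  have hC₀0 : 0 ≤ C₀ := le_trans (norm_nonneg _) (hC₀ 0 0 0)
  have hC₁0 : 0 ≤ C₁ := by
    have := hC₁ 1 0 0
    have h2 : (0:ℝ) ≤ |((1:ℤ):ℝ)| * ‖(W 1 - W (1 - (k:ℤ))) 0 0‖ :=
      mul_nonneg (abs_nonneg _) (norm_nonneg _)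
    linarith
  set K : ℝ := 2 * C₁ + 2 * (k : ℝ) * C₀ with hK
  have hK0 : 0 ≤ K := by positivity
  set L : ℝ := (‖a‖ * ‖b‖ / 4) * K with hL
  have hL0 : 0 ≤ L := by positivity
  refine ⟨4 * L, by positivity, ?_⟩
  intro u hu
  -- abbreviations
  set E₁ : ℤ → ℂ := fun n => Complex.exp ((k : ℂ) * (φ : ℂ) * Complex.I) * (2 * (n : ℂ) - (k : ℂ)) with hE₁
  set E₂ : ℤ → ℂ := fun n => Complex.exp (-((k : ℂ) * (φ : ℂ) * Complex.I)) * (2 * (n : ℂ) + (k : ℂ)) with hE₂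
  -- coefficient bounds
  have habs_sub : ∀ x y : ℂ, ‖x - y‖ ≤ ‖x‖ + ‖y‖ := fun x y => by
    simpa [sub_eq_add_neg] using norm_add_le x (-y)
  have hDbd : ∀ (m m' : ℤ) (i j : Fin 2), ‖(W m - W m') i j‖ ≤ 2 * C₀ := by
    intro m m' i j
    have : ‖W m i j - W m' i j‖ ≤ ‖W m i j‖ + ‖W m' i j‖ :=
      habs_sub _ _
    have h1 := hC₀ m i j
    have h2 := hC₀ m' i j
    simp only [Matrix.sub_apply]
    linarith
  have hexp1 : ‖Complex.exp ((k : ℂ) * (φ : ℂ) * Complex.I)‖ = 1 := by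
    rw [Complex.norm_exp]; simp
  have hexp2 : ‖Complex.exp (-((k : ℂ) * (φ : ℂ) * Complex.I))‖ = 1 := by
    rw [Complex.norm_exp]; simp
  have hcoef1 : ∀ (n : ℤ) (i j : Fin 2),
      ‖E₁ n * (W (n - (k:ℤ)) - W n) i j‖ ≤ K := by
    intro n i j
    have habs2n : ‖2 * (n : ℂ) - (k : ℂ)‖ = |2 * (n:ℝ) - (k:ℝ)| := by
      rw [show (2 * (n : ℂ) - (k : ℂ)) = (((2 * (n:ℝ) - (k:ℝ)) : ℝ) : ℂ) by push_cast; ring,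
        Complex.norm_real, Real.norm_eq_abs]
    have hd : ‖(W (n - (k:ℤ)) - W n) i j‖
        = ‖(W n - W (n - (k:ℤ))) i j‖ := by
      simp only [Matrix.sub_apply]
      exact norm_sub_rev _ _
    have hq := hC₁ n i j
    have hdb : ‖(W n - W (n - (k:ℤ))) i j‖ ≤ 2 * C₀ := hDbd _ _ _ _
    have hdn : 0 ≤ ‖(W n - W (n - (k:ℤ))) i j‖ := norm_nonneg _
    have htri : |2 * (n:ℝ) - (k:ℝ)| ≤ 2 * |(n:ℝ)| + (k:ℝ) := by
      have := abs_add_le (2 * (n:ℝ)) (-(k:ℝ))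
      have hk' : |((k:ℕ):ℝ)| = (k:ℝ) := abs_of_nonneg (by positivity)
      have h2n : |2 * (n:ℝ)| = 2 * |(n:ℝ)| := by rw [abs_mul]; norm_num
      simp only [sub_eq_add_neg]
      calc |2 * (n:ℝ) + -(k:ℝ)| ≤ |2 * (n:ℝ)| + |(-(k:ℝ))| := abs_add_le _ _
        _ = 2 * |(n:ℝ)| + (k:ℝ) := by rw [h2n, abs_neg, hk']
    rw [norm_mul, norm_mul, hexp1, one_mul, habs2n, hd]
    have hnn : 0 ≤ (k:ℝ) := by positivity
    nlinarith [mul_le_mul_of_nonneg_right htri hdn,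
      mul_le_mul_of_nonneg_left hdb hnn, hq, abs_nonneg ((n:ℝ))]
  have hcoef2 : ∀ (n : ℤ) (i j : Fin 2),
      ‖E₂ n * (W (n + (k:ℤ)) - W n) i j‖ ≤ K := by
    intro n i j
    have habs2n : ‖2 * (n : ℂ) + (k : ℂ)‖ = |2 * (n:ℝ) + (k:ℝ)| := by
      rw [show (2 * (n : ℂ) + (k : ℂ)) = (((2 * (n:ℝ) + (k:ℝ)) : ℝ) : ℂ) by push_cast; ring,
        Complex.norm_real, Real.norm_eq_abs]
    have hq := hC₁ (n + (k:ℤ)) i j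
    rw [show n + (k:ℤ) - (k:ℤ) = n by ring] at hq
    have hcast : |((n + (k:ℤ) : ℤ) : ℝ)| = |(n:ℝ) + (k:ℝ)| := by push_cast; ring_nf
    rw [hcast] at hq
    have hdb : ‖(W (n + (k:ℤ)) - W n) i j‖ ≤ 2 * C₀ := hDbd _ _ _ _
    have hdn : 0 ≤ ‖(W (n + (k:ℤ)) - W n) i j‖ := norm_nonneg _
    have htri : |2 * (n:ℝ) + (k:ℝ)| ≤ 2 * |(n:ℝ) + (k:ℝ)| + (k:ℝ) := by
      have hk' : |((k:ℕ):ℝ)| = (k:ℝ) := abs_of_nonneg (by positivity)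
      calc |2 * (n:ℝ) + (k:ℝ)| = |2 * ((n:ℝ) + (k:ℝ)) + -(k:ℝ)| := by ring_nf
        _ ≤ |2 * ((n:ℝ) + (k:ℝ))| + |(-(k:ℝ))| := abs_add_le _ _
        _ = 2 * |(n:ℝ) + (k:ℝ)| + (k:ℝ) := by
            rw [abs_mul, abs_neg, hk']; norm_num
    rw [norm_mul, norm_mul, hexp2, one_mul, habs2n]
    have hnn : 0 ≤ (k:ℝ) := by positivity
    nlinarith [mul_le_mul_of_nonneg_right htri hdn,
      mul_le_mul_of_nonneg_left hdb hnn, hq, abs_nonneg ((n:ℝ) + (k:ℝ))]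
  -- abbreviation for the commutator sequence
  set v : ℤ → Fin 2 → ℂ := fun n =>
      Akop a b φ k (fun m => (W m).mulVec (u m)) n - (W n).mulVec (Akop a b φ k u n) with hv
  have hcabs : ‖Complex.I * (‖a‖ : ℂ) * (‖b‖ : ℂ) / 4‖
      = ‖a‖ * ‖b‖ / 4 := by
    simp [norm_mul, norm_div, Complex.norm_real, Complex.norm_I,
      _root_.abs_of_nonneg (norm_nonneg a), _root_.abs_of_nonneg (norm_nonneg b)]
  -- pointwise bound on |v n i|
  have hvb : ∀ (n : ℤ) (i : Fin 2), ‖v n i‖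
      ≤ L * (‖u (n - (k:ℤ)) 0‖ + ‖u (n - (k:ℤ)) 1‖ +
          ‖u (n + (k:ℤ)) 0‖ + ‖u (n + (k:ℤ)) 1‖) := by
    intro n i
    have hform := comm_formula a b φ k W u n i
    show ‖(Akop a b φ k (fun m => (W m).mulVec (u m)) n -
        (W n).mulVec (Akop a b φ k u n)) i‖ ≤ _
    rw [hform]
    have := abs_structured_le (Complex.I * (‖a‖ : ℂ) * (‖b‖ : ℂ) / 4)
      (E₁ n) (E₂ n) ((W (n - (k:ℤ)) - W n) i 0) ((W (n - (k:ℤ)) - W n) i 1)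
      ((W (n + (k:ℤ)) - W n) i 0) ((W (n + (k:ℤ)) - W n) i 1)
      (u (n - (k:ℤ)) 0) (u (n - (k:ℤ)) 1) (u (n + (k:ℤ)) 0) (u (n + (k:ℤ)) 1) K
      (hcoef1 n i 0) (hcoef1 n i 1) (hcoef2 n i 0) (hcoef2 n i 1)
    rw [hcabs] at this
    calc ‖_‖ ≤ (‖a‖ * ‖b‖ / 4) *
          (K * (‖u (n - (k:ℤ)) 0‖ + ‖u (n - (k:ℤ)) 1‖ +
            ‖u (n + (k:ℤ)) 0‖ + ‖u (n + (k:ℤ)) 1‖)) := this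
      _ = L * (‖u (n - (k:ℤ)) 0‖ + ‖u (n - (k:ℤ)) 1‖ +
            ‖u (n + (k:ℤ)) 0‖ + ‖u (n + (k:ℤ)) 1‖) := by
          rw [hL]; ring
  -- scalar sequences
  set f : ℤ → ℝ := fun m => ‖u m 0‖ ^ 2 + ‖u m 1‖ ^ 2 with hf
  set F : ℤ → ℝ := fun n => ‖v n 0‖ ^ 2 + ‖v n 1‖ ^ 2 with hF
  have hfnn : ∀ m, 0 ≤ f m := fun m => by positivity
  have hFnn : ∀ n, 0 ≤ F n := fun n => by positivity
  -- pointwise square bound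
  have hFb : ∀ n, F n ≤ 8 * L ^ 2 * (f (n - (k:ℤ)) + f (n + (k:ℤ))) := by
    intro n
    have h0 := hvb n 0
    have h1 := hvb n 1
    have := sq_sum_bound L (‖v n 0‖) (‖v n 1‖)
      (‖u (n - (k:ℤ)) 0‖) (‖u (n - (k:ℤ)) 1‖)
      (‖u (n + (k:ℤ)) 0‖) (‖u (n + (k:ℤ)) 1‖)
      (norm_nonneg _) (norm_nonneg _) h0 h1
    calc F n ≤ 8 * L ^ 2 * (‖u (n - (k:ℤ)) 0‖ ^ 2 +
          ‖u (n - (k:ℤ)) 1‖ ^ 2 + ‖u (n + (k:ℤ)) 0‖ ^ 2 +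
          ‖u (n + (k:ℤ)) 1‖ ^ 2) := this
      _ = 8 * L ^ 2 * (f (n - (k:ℤ)) + f (n + (k:ℤ))) := by rw [hf]; ring
  -- summability
  have hfsupp : (Function.support f).Finite := by
    apply hu.subset
    intro m hm
    simp only [Function.mem_support] at hm ⊢
    intro h0
    apply hm
    rw [hf]; simp [h0]
  have hfs : Summable f := summable_of_finite_support hfsupp
  have hfs1 : Summable (fun n : ℤ => f (n - (k:ℤ))) :=
    ((Equiv.subRight (k:ℤ)).summable_iff).mpr hfs
  have hfs2 : Summable (fun n : ℤ => f (n + (k:ℤ))) :=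
    ((Equiv.addRight (k:ℤ)).summable_iff).mpr hfs
  have hGs : Summable (fun n : ℤ => 8 * L ^ 2 * (f (n - (k:ℤ)) + f (n + (k:ℤ)))) :=
    ((hfs1.add hfs2).mul_left _)
  have hFs : Summable F := by
    apply Summable.of_nonneg_of_le hFnn hFb hGs
  -- sum the bound
  have hsum : (∑' n : ℤ, F n) ≤ (4 * L) ^ 2 * (∑' m : ℤ, f m) := by
    have h1 : (∑' n : ℤ, F n) ≤ ∑' n : ℤ, 8 * L ^ 2 * (f (n - (k:ℤ)) + f (n + (k:ℤ))) :=
      Summable.tsum_le_tsum hFb hFs hGs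
    have h2 : (∑' n : ℤ, 8 * L ^ 2 * (f (n - (k:ℤ)) + f (n + (k:ℤ))))
        = 8 * L ^ 2 * ((∑' n : ℤ, f (n - (k:ℤ))) + ∑' n : ℤ, f (n + (k:ℤ))) := by
      rw [tsum_mul_left, Summable.tsum_add hfs1 hfs2]
    have h3 : (∑' n : ℤ, f (n - (k:ℤ))) = ∑' m : ℤ, f m := (Equiv.subRight (k:ℤ)).tsum_eq f
    have h4 : (∑' n : ℤ, f (n + (k:ℤ))) = ∑' m : ℤ, f m := (Equiv.addRight (k:ℤ)).tsum_eq f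
    rw [h2, h3, h4] at h1
    calc (∑' n : ℤ, F n) ≤ 8 * L ^ 2 * ((∑' m : ℤ, f m) + ∑' m : ℤ, f m) := h1
      _ ≤ (4 * L) ^ 2 * (∑' m : ℤ, f m) := by
          have hnn : 0 ≤ ∑' m : ℤ, f m := tsum_nonneg hfnn
          nlinarith [sq_nonneg L]
  -- conclude
  show l2normZ v ≤ 4 * L * l2normZ u
  rw [show l2normZ v = Real.sqrt (∑' n : ℤ, F n) from rfl,
    show l2normZ u = Real.sqrt (∑' m : ℤ, f m) from rfl]
  calc Real.sqrt (∑' n : ℤ, F n) ≤ Real.sqrt ((4 * L) ^ 2 * (∑' m : ℤ, f m)) :=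
        Real.sqrt_le_sqrt hsum
    _ = (4 * L) * Real.sqrt (∑' m : ℤ, f m) := by
        rw [Real.sqrt_mul (sq_nonneg _), Real.sqrt_sq (by positivity)]
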